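/- arXiv:0902.3776 — 2 statements merged into one kernel-verified Lean document; each statement's English description precedes it below -/
import Mathlib

section
/- In the semigroup S = ⟨a,b,c | abcc = cba⟩, for any constant k there exists n such that the geodesics V_n = (abc)^n and U_n = c(ba)^n satisfy V_n·c =_S U_n (so their endpoints are at distance at most 1 in the Cayley graph) but V_n and U_n are not k-fellow-travellers. Consequently, the set of all geodesics of S does not have the fellow-traveller property. -/
/-- The standard padding map `δ_X` on pairs of words. -/
def pad {X : Type*} : List X → List X → List (Option X × Option X)
  | [], [] => []
  | [], y :: ys => (none, some y) :: pad [] ys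
  | x :: xs, [] => (some x, none) :: pad xs []
  | x :: xs, y :: ys => (some x, some y) :: pad xs ys
  termination_by a b => a.length + b.length

/-- The relators of the co-presented group of the semigroup presentation `Rel`. -/
def relators {X : Type*} (Rel : Set (List X × List X)) : Set (FreeGroup X) :=
  {g | ∃ p ∈ Rel, g = (p.1.map FreeGroup.of).prod * ((p.2.map FreeGroup.of).prod)⁻¹}

/-- Evaluation of a positive word in the co-presented group. -/
def toG {X : Type*} (Rel : Set (List X × List X)) (w : List X) :
    PresentedGroup (relators Rel) :=
  (w.map PresentedGroup.of).prod

/-- Equality in the semigroup presented by `Rel`: the congruence on the free monoid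
generated by the defining relations. -/
def SGRel {X : Type*} (Rel : Set (List X × List X)) (w u : List X) : Prop :=
  conGen (fun a b : FreeMonoid X => ∃ p ∈ Rel,
      a = FreeMonoid.ofList p.1 ∧ b = FreeMonoid.ofList p.2)
    (FreeMonoid.ofList w) (FreeMonoid.ofList u)

/-- The word metric on the co-presented group with respect to `X ∪ X⁻¹`;
its restriction to (the image of) the semigroup is the induced metric. -/
noncomputable def gdist {X : Type*} (Rel : Set (List X × List X))
    (g h : PresentedGroup (relators Rel)) : ℕ∞ :=
  sInf {n : ℕ∞ | ∃ l : List (X × Bool),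
    (l.map (fun b => if b.2 then (PresentedGroup.of b.1 : PresentedGroup (relators Rel))
      else (PresentedGroup.of b.1)⁻¹)).prod = g⁻¹ * h ∧ (l.length : ℕ∞) = n}

/-- `W` and `U` are `k`-fellow-travellers with respect to the induced metric. -/
noncomputable def KFT {X : Type*} (Rel : Set (List X × List X)) (k : ℕ)
    (W U : List X) : Prop :=
  ∀ n : ℕ, gdist Rel (toG Rel (W.take n)) (toG Rel (U.take n)) ≤ (k : ℕ∞)

/-- `L` is an automatic structure for the semigroup presented by `Rel`. -/
def IsAutomaticStructure {X : Type*} (Rel : Set (List X × List X))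
    (L : Language X) : Prop :=
  L.IsRegular ∧ (∀ u : List X, ∃ w ∈ L, SGRel Rel w u) ∧
  ∀ x : Option X, Language.IsRegular
    {p : List (Option X × Option X) | ∃ W ∈ L, ∃ U ∈ L,
      SGRel Rel (W ++ x.toList) U ∧ p = pad W U}

/-- The semigroup presented by `Rel` is automatic. -/
def IsAutomatic {X : Type*} (Rel : Set (List X × List X)) : Prop :=
  ∃ L : Language X, IsAutomaticStructure Rel L

/-- The three generators of the example semigroup `⟨a,b,c | abcc = cba⟩`. -/
inductive Gen : Type | a | b | c

/-- The single defining relation `abcc = cba`. -/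
def exRel : Set (List Gen × List Gen) :=
  {([Gen.a, Gen.b, Gen.c, Gen.c], [Gen.c, Gen.b, Gen.a])}

/-- The word `V_n = (abc)^n`. -/
def Vword (n : ℕ) : List Gen := (List.replicate n [Gen.a, Gen.b, Gen.c]).flatten

/-- The word `U_n = c(ba)^n`. -/
def Uword (n : ℕ) : List Gen := Gen.c :: (List.replicate n [Gen.b, Gen.a]).flatten

/-- A word is a geodesic if no shorter word represents the same element of `S`. -/
def IsGeodesic (W : List Gen) : Prop :=
  ∀ U : List Gen, SGRel exRel W U → W.length ≤ U.length

deriving instance DecidableEq for Gen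

def LHSw : List Gen := [Gen.a, Gen.b, Gen.c, Gen.c]

def RHSw : List Gen := [Gen.c, Gen.b, Gen.a]

def startsL : List Gen → Bool
  | Gen.a :: Gen.b :: Gen.c :: Gen.c :: _ => true
  | _ => false

lemma startsL_iff (w : List Gen) : startsL w = true ↔ ∃ r, w = LHSw ++ r := by
  constructor
  · intro h
    unfold startsL at h
    split at h
    · rename_i r; exact ⟨r, rfl⟩
    · simp at h
  · rintro ⟨r, rfl⟩; rfl

def findRedex : List Gen → Option (List Gen × List Gen)
  | [] => none
  | g :: t => if startsL (g :: t) then some ([], t.drop 3)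
              else (findRedex t).map fun p => (g :: p.1, p.2)

lemma findRedex_spec : ∀ w p s, findRedex w = some (p, s) → w = p ++ LHSw ++ s := by
  intro w
  induction w with
  | nil => intro p s h; simp [findRedex] at h
  | cons g t ih =>
    intro p s h
    rw [findRedex] at h
    split at h
    · rename_i hs
      obtain ⟨r, hr⟩ := (startsL_iff _).1 hs
      simp at h
      obtain ⟨h1, h2⟩ := h
      have : t.drop 3 = r := by
        have := hr
        simp [LHSw] at this
        obtain ⟨-, ht⟩ := this
        rw [ht]; rfl
      subst h1; rw [hr, ← h2, this]; simp
    · simp only [Option.map_eq_some_iff] at h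
      obtain ⟨⟨p', s'⟩, hfr, heq⟩ := h
      simp at heq
      obtain ⟨h1, h2⟩ := heq
      have := ih p' s' hfr
      subst h1 h2
      simp [this]

lemma findRedex_leftmost : ∀ x y : List Gen, ∃ p s m,
    findRedex (x ++ LHSw ++ y) = some (p, s) ∧ x = p ++ m := by
  intro x
  induction x with
  | nil =>
    intro y
    refine ⟨[], y, [], ?_, rfl⟩
    show findRedex (Gen.a :: (Gen.b :: Gen.c :: Gen.c :: y)) = _
    rw [findRedex]
    simp [startsL]
  | cons g t ih =>
    intro y
    by_cases hs : startsL (g :: (t ++ LHSw ++ y)) = true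
    · obtain ⟨r, hr⟩ := (startsL_iff _).1 hs
      refine ⟨[], ((t ++ LHSw ++ y).drop 3), g :: t, ?_, rfl⟩
      have h2 : g :: t ++ LHSw ++ y = g :: (t ++ LHSw ++ y) := by simp
      rw [h2, findRedex, if_pos hs]
    · obtain ⟨p, s, m, hfr, hm⟩ := ih y
      refine ⟨g :: p, s, m, ?_, by rw [hm]; rfl⟩
      have h2 : g :: t ++ LHSw ++ y = g :: (t ++ LHSw ++ y) := by simp
      rw [h2, findRedex, if_neg hs, hfr]
      rfl

lemma decompL {m s y : List Gen} (h : LHSw ++ s = m ++ LHSw ++ y) :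
    (m = [] ∧ s = y) ∨ ∃ q, m = LHSw ++ q ∧ s = q ++ LHSw ++ y := by
  match m with
  | [] => left; simpa [LHSw] using h
  | [g1] => simp [LHSw] at h
  | [g1, g2] => simp [LHSw] at h
  | [g1, g2, g3] => simp [LHSw] at h
  | g1 :: g2 :: g3 :: g4 :: q =>
    right
    simp only [LHSw, List.cons_append, List.cons.injEq, List.nil_append] at h
    obtain ⟨h1, h2, h3, h4, h5⟩ := h
    subst h1; subst h2; subst h3; subst h4
    exact ⟨q, rfl, by simpa [LHSw] using h5⟩

lemma lenLHS : LHSw.length = 4 := rfl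

lemma lenRHS : RHSw.length = 3 := rfl

def NF (w : List Gen) : List Gen :=
  match h : findRedex w with
  | none => w
  | some (p, s) => NF (p ++ RHSw ++ s)
termination_by w.length
decreasing_by
  have := findRedex_spec w p s h
  subst this
  simp [LHSw, RHSw]

lemma NF_none {w : List Gen} (h : findRedex w = none) : NF w = w := by
  rw [NF, h]

lemma NF_step {w p s : List Gen} (h : findRedex w = some (p, s)) :
    NF w = NF (p ++ RHSw ++ s) := by
  rw [NF, h]

lemma NF_length : ∀ w : List Gen, (NF w).length ≤ w.length := by
  suffices H : ∀ n, ∀ w : List Gen, w.length = n → (NF w).length ≤ w.length by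
    intro w; exact H w.length w rfl
  intro n
  induction n using Nat.strong_induction_on with
  | _ n ih =>
  rintro w rfl
  cases h : findRedex w with
  | none => rw [NF_none h]
  | some ps =>
    obtain ⟨p, s⟩ := ps
    have hw := findRedex_spec w p s h
    rw [NF_step h]
    have hlt : (p ++ RHSw ++ s).length < w.length := by subst hw; simp [LHSw, RHSw]
    exact le_trans (ih _ hlt _ rfl) (le_of_lt hlt)

lemma NF_rewrite : ∀ w x y : List Gen, w = x ++ LHSw ++ y →
    NF w = NF (x ++ RHSw ++ y) := by
  suffices H : ∀ n, ∀ w : List Gen, w.length = n → ∀ x y : List Gen,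
      w = x ++ LHSw ++ y → NF w = NF (x ++ RHSw ++ y) by
    intro w; exact H w.length w rfl
  intro n
  induction n using Nat.strong_induction_on with
  | _ n ih =>
  rintro w rfl x y rfl
  obtain ⟨p, s, m, hfr, hm⟩ := findRedex_leftmost x y
  have hspec := findRedex_spec _ p s hfr
  subst hm
  have hps : LHSw ++ s = m ++ LHSw ++ y := by
    apply List.append_cancel_left (as := p)
    simpa using hspec.symm
  rcases decompL hps with ⟨rfl, rfl⟩ | ⟨q, rfl, rfl⟩
  · rw [NF_step hfr]; simp
  · rw [NF_step hfr]
    simp only [List.append_assoc] at ih ⊢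
    have e1 := ih (p ++ (RHSw ++ (q ++ (LHSw ++ y)))).length
        (by simp [LHSw, RHSw]) (p ++ (RHSw ++ (q ++ (LHSw ++ y)))) rfl
        (p ++ RHSw ++ q) y (by simp)
    have e2 := ih (p ++ (LHSw ++ (q ++ (RHSw ++ y)))).length
        (by simp [LHSw, RHSw]) (p ++ (LHSw ++ (q ++ (RHSw ++ y)))) rfl
        p (q ++ RHSw ++ y) (by simp)
    simp only [List.append_assoc] at e1 e2
    rw [e1, e2]

lemma NF_append_left : ∀ x y : List Gen, NF (x ++ y) = NF (NF x ++ y) := by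
  suffices H : ∀ n, ∀ x : List Gen, x.length = n → ∀ y, NF (x ++ y) = NF (NF x ++ y) by
    intro x; exact H x.length x rfl
  intro n
  induction n using Nat.strong_induction_on with
  | _ n ih =>
  rintro x rfl y
  cases h : findRedex x with
  | none => rw [NF_none h]
  | some ps =>
    obtain ⟨p, s⟩ := ps
    have hx := findRedex_spec _ p s h
    rw [NF_step h]
    have h1 : NF (x ++ y) = NF ((p ++ RHSw ++ s) ++ y) := by
      have := NF_rewrite (x ++ y) p (s ++ y) (by rw [hx]; simp)
      rw [this]; simp
    rw [h1]
    exact ih (p ++ RHSw ++ s).length (by rw [hx]; simp [LHSw, RHSw]) _ rfl y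

lemma NF_append_right : ∀ y x : List Gen, NF (x ++ y) = NF (x ++ NF y) := by
  suffices H : ∀ n, ∀ y : List Gen, y.length = n → ∀ x, NF (x ++ y) = NF (x ++ NF y) by
    intro y; exact H y.length y rfl
  intro n
  induction n using Nat.strong_induction_on with
  | _ n ih =>
  rintro y rfl x
  cases h : findRedex y with
  | none => rw [NF_none h]
  | some ps =>
    obtain ⟨p, s⟩ := ps
    have hy := findRedex_spec _ p s h
    rw [NF_step h]
    have h1 : NF (x ++ y) = NF (x ++ (p ++ RHSw ++ s)) := by
      have := NF_rewrite (x ++ y) (x ++ p) s (by rw [hy]; simp)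
      rw [this]; simp
    rw [h1]
    exact ih (p ++ RHSw ++ s).length (by rw [hy]; simp [LHSw, RHSw]) _ rfl x

lemma NF_mul (x y x' y' : List Gen) (h1 : NF x = NF x') (h2 : NF y = NF y') :
    NF (x ++ y) = NF (x' ++ y') := by
  rw [NF_append_left x y, NF_append_right y (NF x), h1, h2,
    ← NF_append_right y' (NF x'), ← NF_append_left x' y']

def nfCon : Con (FreeMonoid Gen) where
  r x y := NF (FreeMonoid.toList x) = NF (FreeMonoid.toList y)
  iseqv := ⟨fun _ => rfl, Eq.symm, Eq.trans⟩
  mul' h1 h2 := by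
    simp only [FreeMonoid.toList_mul]
    exact NF_mul _ _ _ _ h1 h2

lemma SGRel_NF {w u : List Gen} (h : SGRel exRel w u) : NF w = NF u := by
  have hle : conGen (fun a b : FreeMonoid Gen => ∃ p ∈ exRel,
      a = FreeMonoid.ofList p.1 ∧ b = FreeMonoid.ofList p.2) ≤ nfCon := by
    apply Con.conGen_le.2
    rintro x y ⟨p, hp, rfl, rfl⟩
    rcases hp with rfl
    show NF LHSw = NF RHSw
    have := NF_rewrite LHSw [] [] (by simp)
    simpa using this
  have := hle h
  simpa [nfCon] using this

def Bflat (n : ℕ) : List Gen := (List.replicate n [Gen.b, Gen.a]).flatten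

lemma Vword_succ (n : ℕ) : Vword (n + 1) = Gen.a :: Gen.b :: Gen.c :: Vword n := by
  simp [Vword, List.replicate_succ]

lemma Bflat_succ (n : ℕ) : Bflat (n + 1) = Gen.b :: Gen.a :: Bflat n := by
  simp [Bflat, List.replicate_succ]

lemma Uword_eq (n : ℕ) : Uword n = Gen.c :: Bflat n := rfl

lemma Vword_length (n : ℕ) : (Vword n).length = 3 * n := by
  induction n with
  | zero => rfl
  | succ m ih => rw [Vword_succ]; simp [ih]; omega

lemma Bflat_length (n : ℕ) : (Bflat n).length = 2 * n := by
  induction n with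
  | zero => rfl
  | succ m ih => rw [Bflat_succ]; simp [ih]; omega

lemma Uword_length (n : ℕ) : (Uword n).length = 2 * n + 1 := by
  rw [Uword_eq]; simp [Bflat_length]

lemma findRedex_cons_not (g : Gen) (t : List Gen) (h : startsL (g :: t) = false) :
    findRedex (g :: t) = (findRedex t).map fun p => (g :: p.1, p.2) := by
  rw [findRedex, if_neg (by simp [h])]

lemma Vword_irred (n : ℕ) : findRedex (Vword n) = none ∧
    findRedex (Gen.c :: Vword n) = none ∧
    findRedex (Gen.b :: Gen.c :: Vword n) = none := by
  induction n with
  | zero => refine ⟨rfl, ?_, ?_⟩ <;> decide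
  | succ m ih =>
    obtain ⟨ih1, ih2, ih3⟩ := ih
    have hV : findRedex (Vword (m + 1)) = none := by
      rw [Vword_succ]
      have hs : startsL (Gen.a :: Gen.b :: Gen.c :: Vword m) = false := by
        cases m with
        | zero => rfl
        | succ j => rw [Vword_succ]; rfl
      rw [findRedex_cons_not _ _ hs]
      rw [show findRedex (Gen.b :: Gen.c :: Vword m) = none from ih3]
      rfl
    refine ⟨hV, ?_, ?_⟩
    · rw [findRedex_cons_not _ _ (by rfl), hV]; rfl
    · rw [findRedex_cons_not _ _ (by rfl)]
      rw [findRedex_cons_not _ _ (by rfl), hV]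
      rfl

lemma Bflat_irred (n : ℕ) : findRedex (Bflat n) = none ∧
    findRedex (Gen.a :: Bflat n) = none := by
  induction n with
  | zero => exact ⟨rfl, by decide⟩
  | succ m ih =>
    obtain ⟨ih1, ih2⟩ := ih
    have hB : findRedex (Bflat (m + 1)) = none := by
      rw [Bflat_succ]
      rw [findRedex_cons_not _ _ (by rfl), ih2]
      rfl
    refine ⟨hB, ?_⟩
    have hs : startsL (Gen.a :: Bflat (m + 1)) = false := by
      rw [Bflat_succ]
      cases m with
      | zero => rfl
      | succ j => rw [Bflat_succ]; rfl
    rw [findRedex_cons_not _ _ hs, hB]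
    rfl

lemma Uword_irred (n : ℕ) : findRedex (Uword n) = none := by
  rw [Uword_eq, findRedex_cons_not _ _ (by rfl), (Bflat_irred n).1]
  rfl

lemma Vword_geodesic (n : ℕ) : IsGeodesic (Vword n) := by
  intro U h
  have := SGRel_NF h
  rw [NF_none (Vword_irred n).1] at this
  calc (Vword n).length = (NF U).length := by rw [← this]
    _ ≤ U.length := NF_length U

lemma Uword_geodesic (n : ℕ) : IsGeodesic (Uword n) := by
  intro U h
  have := SGRel_NF h
  rw [NF_none (Uword_irred n)] at this
  calc (Uword n).length = (NF U).length := by rw [← this]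
    _ ≤ U.length := NF_length U

lemma sg_refl (w : List Gen) : SGRel exRel w w := (conGen _).refl _

lemma sg_trans {w x y : List Gen} (h1 : SGRel exRel w x) (h2 : SGRel exRel x y) :
    SGRel exRel w y := (conGen _).trans h1 h2

lemma sg_mul {w x y z : List Gen} (h1 : SGRel exRel w x) (h2 : SGRel exRel y z) :
    SGRel exRel (w ++ y) (x ++ z) := by
  unfold SGRel at *
  rw [FreeMonoid.ofList_append, FreeMonoid.ofList_append]
  exact (conGen _).mul h1 h2

lemma sg_base : SGRel exRel LHSw RHSw :=
  ConGen.Rel.of _ _ ⟨(LHSw, RHSw), rfl, rfl, rfl⟩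

lemma sg_key : ∀ m j : ℕ, SGRel exRel (Vword m ++ Uword j) (Uword (m + j)) := by
  intro m
  induction m with
  | zero => intro j; simpa [Vword] using sg_refl (Uword j)
  | succ i ih =>
    intro j
    have h1 : Vword (i + 1) ++ Uword j = [Gen.a, Gen.b, Gen.c] ++ (Vword i ++ Uword j) := by
      rw [Vword_succ]; simp
    have h2 : SGRel exRel (Vword (i + 1) ++ Uword j)
        ([Gen.a, Gen.b, Gen.c] ++ Uword (i + j)) := by
      rw [h1]
      exact sg_mul (sg_refl [Gen.a, Gen.b, Gen.c]) (ih j)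
    apply sg_trans h2
    have h3 : [Gen.a, Gen.b, Gen.c] ++ Uword (i + j) = LHSw ++ Bflat (i + j) := by
      rw [Uword_eq]; rfl
    have h4 : Uword (i + 1 + j) = RHSw ++ Bflat (i + j) := by
      rw [Uword_eq, show i + 1 + j = (i + j) + 1 by omega, Bflat_succ]; rfl
    rw [h3, h4]
    exact sg_mul sg_base (sg_refl (Bflat (i + j)))

lemma sg_main (n : ℕ) : SGRel exRel (Vword n ++ [Gen.c]) (Uword n) := by
  have := sg_key n 0
  simpa [Uword_eq, Bflat] using this

def fgen : Gen → Multiplicative ℤ := fun g => match g with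
  | Gen.a => Multiplicative.ofAdd 1
  | _ => 1

lemma hrels : ∀ r ∈ relators exRel, FreeGroup.lift fgen r = 1 := by
  rintro r ⟨p, hp, rfl⟩
  rcases hp with rfl
  simp [fgen]

noncomputable def ψ : PresentedGroup (relators exRel) →* Multiplicative ℤ :=
  PresentedGroup.toGroup hrels

lemma ψ_toG (w : List Gen) :
    ψ (toG exRel w) = Multiplicative.ofAdd (w.count Gen.a : ℤ) := by
  induction w with
  | nil => simp [toG]
  | cons g t ih =>
    have : toG exRel (g :: t) = PresentedGroup.of g * toG exRel t := by
      simp [toG]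
    rw [this, map_mul, ih]
    show PresentedGroup.toGroup hrels (PresentedGroup.of g) * _ = _
    rw [PresentedGroup.toGroup.of]
    cases g <;> simp [fgen, List.count_cons, ← ofAdd_add, add_comm]

lemma ψ_word_bound (l : List (Gen × Bool)) :
    |Multiplicative.toAdd (ψ ((l.map (fun b => if b.2
      then (PresentedGroup.of b.1 : PresentedGroup (relators exRel))
      else (PresentedGroup.of b.1)⁻¹)).prod))| ≤ (l.length : ℤ) := by
  induction l with
  | nil => simp
  | cons hd tl ih =>
    simp only [List.map_cons, List.prod_cons, map_mul, toAdd_mul, List.length_cons]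
    refine le_trans (abs_add_le _ _) ?_
    push_cast
    have h1 : |Multiplicative.toAdd (ψ (if hd.2 then (PresentedGroup.of hd.1 :
        PresentedGroup (relators exRel)) else (PresentedGroup.of hd.1)⁻¹))| ≤ 1 := by
      have hofg : ∀ g : Gen, |Multiplicative.toAdd (ψ (PresentedGroup.of g))| ≤ 1 := by
        intro g
        show |Multiplicative.toAdd (PresentedGroup.toGroup hrels (PresentedGroup.of g))| ≤ 1
        rw [PresentedGroup.toGroup.of]
        cases g <;> simp [fgen]
      obtain ⟨g, bb⟩ := hd
      cases bb with
      | false =>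
        show |Multiplicative.toAdd (ψ ((PresentedGroup.of g)⁻¹))| ≤ 1
        rw [map_inv, toAdd_inv, abs_neg]; exact hofg g
      | true => exact hofg g
  -- combine
    omega

lemma gdist_lower {g h : PresentedGroup (relators exRel)} {N : ℕ}
    (hN : (N : ℤ) ≤ |Multiplicative.toAdd ((ψ g)⁻¹ * ψ h)|) :
    (N : ℕ∞) ≤ gdist exRel g h := by
  apply le_sInf
  rintro b ⟨l, hprod, rfl⟩
  have := ψ_word_bound l
  rw [hprod] at this
  rw [map_mul, map_inv] at this
  have hle : (N : ℤ) ≤ (l.length : ℤ) := le_trans hN this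
  have : N ≤ l.length := by exact_mod_cast hle
  exact_mod_cast Nat.cast_le.2 this

lemma Vword_count (n : ℕ) : (Vword n).count Gen.a = n := by
  induction n with
  | zero => rfl
  | succ m ih => rw [Vword_succ]; simp [List.count_cons, ih]

lemma Bflat_count (n : ℕ) : (Bflat n).count Gen.a = n := by
  induction n with
  | zero => rfl
  | succ m ih => rw [Bflat_succ]; simp [List.count_cons, ih]

lemma Uword_count (n : ℕ) : (Uword n).count Gen.a = n := by
  rw [Uword_eq]; simp [List.count_cons, Bflat_count]

lemma Vword_add (s t : ℕ) : Vword (s + t) = Vword s ++ Vword t := by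
  unfold Vword
  rw [List.replicate_add, List.flatten_append]

lemma Vword_take (t r : ℕ) : (Vword (t + r)).take (3 * t) = Vword t := by
  rw [Vword_add, ← Vword_length t, List.take_left]

/-- In `S = ⟨a,b,c | abcc = cba⟩`, for any `k` there is `n` such that the geodesics
`V_n = (abc)^n` and `U_n = c(ba)^n` satisfy `V_n · c = U_n` in `S` (so their endpoints
are at distance at most 1 in the Cayley graph) but `V_n` and `U_n` are not
`k`-fellow-travellers; hence the set of geodesics lacks the fellow-traveller property. -/
theorem geodesics_not_fellow_travelling (k : ℕ) :
    ∃ n : ℕ, IsGeodesic (Vword n) ∧ IsGeodesic (Uword n) ∧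
      SGRel exRel (Vword n ++ [Gen.c]) (Uword n) ∧
      ¬ KFT exRel k (Vword n) (Uword n) := by
  refine ⟨3 * k + 6, Vword_geodesic _, Uword_geodesic _, sg_main _, ?_⟩
  intro hK
  set n : ℕ := 3 * k + 6 with hn
  set t : ℕ := 2 * k + 5 with ht
  have hVtake : (Vword n).take (3 * t) = Vword t := by
    have : n = t + (k + 1) := by omega
    rw [this, Vword_take]
  have hUtake : (Uword n).take (3 * t) = Uword n := by
    apply List.take_of_length_le
    rw [Uword_length]; omega
  have hg := hK (3 * t)
  rw [hVtake, hUtake] at hg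
  have hlow : ((k + 1 : ℕ) : ℕ∞) ≤ gdist exRel (toG exRel (Vword t)) (toG exRel (Uword n)) := by
    apply gdist_lower
    rw [ψ_toG, ψ_toG, Vword_count, Uword_count]
    rw [← ofAdd_neg, ← ofAdd_add, toAdd_ofAdd]
    have : (-(t : ℤ)) + n = (k + 1 : ℤ) := by push_cast; omega
    rw [this]
    rw [abs_of_nonneg (by positivity)]
    push_cast; omega
  have : ((k + 1 : ℕ) : ℕ∞) ≤ (k : ℕ∞) := le_trans hlow hg
  have : k + 1 ≤ k := by exact_mod_cast this
  omega
end

section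
/- If B is obtained from an admissible A by fixing A at location ℓ, then |A| = |B|, π(A) = π(B), and A and B are 1-fellow-travellers with respect to the induced metric d_Φ. -/
/-- `P` is a piece for the presentation with defining words `R`: it occurs as a
subword of defining words in two essentially different ways. -/
def IsPiece {X : Type*} (R : Set (List X)) (P : List X) : Prop :=
  ∃ W₁ ∈ R, ∃ W₂ ∈ R, ∃ U₁ U₂ V₁ V₂ : List X,
    W₁ = U₁ ++ P ++ U₂ ∧ W₂ = V₁ ++ P ++ V₂ ∧ (U₁ ≠ V₁ ∨ U₂ ≠ V₂)

/-- The piece-length `lp W`: the minimal number `k` such that `W` decomposes as a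
concatenation of `k` pieces; `0` for the empty word, `⊤` if no decomposition exists. -/
noncomputable def pieceLength {X : Type*} (R : Set (List X)) (W : List X) : ℕ∞ :=
  sInf {n : ℕ∞ | ∃ l : List (List X),
    (∀ P ∈ l, IsPiece R P) ∧ l.flatten = W ∧ (l.length : ℕ∞) = n}

/-- The set of defining words of a presentation given by a set of relations. -/
def defWords {X : Type*} (Rel : Set (List X × List X)) : Set (List X) :=
  {W | ∃ p ∈ Rel, W = p.1 ∨ W = p.2}

/-- The `K₃²` condition: (a) the two sides of each relation start with different
generators and end with different generators; (b) every defining word has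
piece-length at least 3; (c) the words of any two distinct defining relations are
pairwise distinct (and the two sides of each relation are distinct). -/
def K32 {X : Type*} (Rel : Set (List X × List X)) : Prop :=
  (∀ p ∈ Rel, p.1.head? ≠ p.2.head? ∧ p.1.getLast? ≠ p.2.getLast?) ∧
  (∀ W ∈ defWords Rel, 3 ≤ pieceLength (defWords Rel) W) ∧
  (∀ p ∈ Rel, p.1 ≠ p.2) ∧
  (∀ p ∈ Rel, ∀ q ∈ Rel, p ≠ q →
    p.1 ≠ q.1 ∧ p.1 ≠ q.2 ∧ p.2 ≠ q.1 ∧ p.2 ≠ q.2)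

/-- `𝓑`: the set of (nonempty) subwords of defining words. -/
def Bset {X : Type*} (Rel : Set (List X × List X)) : Set (List X) :=
  {W | W ≠ [] ∧ ∃ D ∈ defWords Rel, W <:+: D}

/-- A word over the alphabet `Φ = {φ_W : W ∈ 𝓑}`, recorded as its list of blocks. -/
def IsPhiWord {X : Type*} (Rel : Set (List X × List X)) (A : List (List X)) : Prop :=
  ∀ W ∈ A, W ∈ Bset Rel

/-- `A = φ_{W₁}⋯φ_{Wₙ}` is admissible: no product of consecutive blocks lies in `𝓑`. -/
def Admissible {X : Type*} (Rel : Set (List X × List X)) (A : List (List X)) : Prop :=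
  List.Chain' (fun u v => (u ++ v) ∉ Bset Rel) A

/-- The block preceding position `i` (`0`-based), with `W₀ = ε`. -/
def prevBlock {X : Type*} (A : List (List X)) (i : ℕ) : List X :=
  if i = 0 then [] else A.getD (i - 1) []

/-- The `i`-th (0-based) coordinate of the auxiliary vector `κ_A` equals `1`:
there are decompositions `W_{i-1} = q ++ p` and `W_{i+1} = s ++ t` with
`p ++ W_i ++ s` a defining word whose piece-length exceeds that of its complement. -/
def KappaOne {X : Type*} (Rel : Set (List X × List X)) (A : List (List X)) (i : ℕ) : Prop :=
  ∃ p s q t : List X,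
    prevBlock A i = q ++ p ∧ A.getD (i + 1) [] = s ++ t ∧
    (p ++ A.getD i [] ++ s) ∈ defWords Rel ∧
    ∃ C : List X, ((p ++ A.getD i [] ++ s, C) ∈ Rel ∨ (C, p ++ A.getD i [] ++ s) ∈ Rel) ∧
      pieceLength (defWords Rel) C < pieceLength (defWords Rel) (p ++ A.getD i [] ++ s)

/-- `A` is efficient: admissible and `κ_A` is the zero vector. -/
def Efficient {X : Type*} (Rel : Set (List X × List X)) (A : List (List X)) : Prop :=
  Admissible Rel A ∧ ∀ i < A.length, ¬ KappaOne Rel A i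

/-- Condition (†): each defining relation `L = R` satisfies `lp L + lp R ≥ 7`. -/
def Dagger {X : Type*} (Rel : Set (List X × List X)) : Prop :=
  ∀ p ∈ Rel, 7 ≤ pieceLength (defWords Rel) p.1 + pieceLength (defWords Rel) p.2

/-- The Piefer order: `A ≼ B` iff `κ_A = κ_B` or `κ_A` precedes `κ_B` in shortlex. -/
def PieferLe {X : Type*} (Rel : Set (List X × List X)) (A B : List (List X)) : Prop :=
  A.length < B.length ∨ (A.length = B.length ∧
    ((∀ i < B.length, (KappaOne Rel A i ↔ KappaOne Rel B i)) ∨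
      ∃ j < B.length, (∀ i < j, (KappaOne Rel A i ↔ KappaOne Rel B i)) ∧
        ¬ KappaOne Rel A j ∧ KappaOne Rel B j))

/-- `A` is left-greedy: no block extended by the first letter of the next block is in `𝓑`. -/
def LeftGreedy {X : Type*} (Rel : Set (List X × List X)) (A : List (List X)) : Prop :=
  List.Chain' (fun u v => ∀ x ∈ v.head?, (u ++ [x]) ∉ Bset Rel) A

/-- The word metric on the co-presented group with respect to the generating set
`𝓑 ∪ 𝓑⁻¹`; its restriction to the semigroup is the induced metric `d_Φ`. -/
noncomputable def dPhi {X : Type*} (Rel : Set (List X × List X))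
    (g h : PresentedGroup (relators Rel)) : ℕ∞ :=
  sInf {n : ℕ∞ | ∃ l : List (List X × Bool), (∀ b ∈ l, b.1 ∈ Bset Rel) ∧
    (l.map (fun b => if b.2 then toG Rel b.1 else (toG Rel b.1)⁻¹)).prod = g⁻¹ * h ∧
    (l.length : ℕ∞) = n}


section Helpers
variable {X : Type*} (Rel : Set (List X × List X))

theorem toG_nil' : toG Rel ([] : List X) = 1 := rfl

theorem toG_append' (u v : List X) : toG Rel (u ++ v) = toG Rel u * toG Rel v := by
  simp [toG]

theorem toG_eq_mk' (w : List X) :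
    toG Rel w = PresentedGroup.mk (relators Rel) ((w.map FreeGroup.of).prod) := by
  rw [map_list_prod, List.map_map]; rfl

theorem toG_rel' {u v : List X} (h : (u, v) ∈ Rel) : toG Rel u = toG Rel v := by
  rw [toG_eq_mk', toG_eq_mk']
  have hrel : (u.map FreeGroup.of).prod * ((v.map FreeGroup.of).prod)⁻¹ ∈
      Subgroup.normalClosure (relators Rel) :=
    Subgroup.subset_normalClosure ⟨(u, v), h, rfl⟩
  have h1 : PresentedGroup.mk (relators Rel)
      ((u.map FreeGroup.of).prod * ((v.map FreeGroup.of).prod)⁻¹) = 1 :=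
    (QuotientGroup.eq_one_iff _).mpr hrel
  rw [map_mul, map_inv, mul_inv_eq_one] at h1
  exact h1

theorem flatten_take_succ' (L : List (List X)) (j : ℕ) :
    (L.take (j+1)).flatten = (L.take j).flatten ++ L.getD j [] := by
  rw [List.take_succ, List.flatten_append, List.getD_eq_getElem?_getD]
  cases h : L[j]? <;> simp

theorem dPhi_le_of_eq' {g h : PresentedGroup (relators Rel)} (hgh : g = h) :
    dPhi Rel g h ≤ 1 := by
  have h0 : dPhi Rel g h ≤ 0 := sInf_le ⟨[], by simp, by simp [hgh], by simp⟩
  exact le_trans h0 (by norm_num)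

theorem dPhi_le_one_right' (g : PresentedGroup (relators Rel)) {u : List X}
    (hu : u ∈ Bset Rel) : dPhi Rel g (g * toG Rel u) ≤ 1 :=
  sInf_le ⟨[(u, true)], by simpa using hu, by simp, by simp⟩

theorem dPhi_le_one_left' (g : PresentedGroup (relators Rel)) {u : List X}
    (hu : u ∈ Bset Rel) : dPhi Rel (g * toG Rel u) g ≤ 1 :=
  sInf_le ⟨[(u, false)], by simpa using hu, by simp [mul_assoc], by simp⟩

theorem sgrel_base' {u v : List X} (h : (u, v) ∈ Rel ∨ (v, u) ∈ Rel) : SGRel Rel u v := by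
  unfold SGRel
  rcases h with h | h
  · exact ConGen.Rel.of _ _ ⟨_, h, rfl, rfl⟩
  · exact ConGen.Rel.symm (ConGen.Rel.of _ _ ⟨_, h, rfl, rfl⟩)

theorem sgrel_infix' (P Q u v : List X) (h : SGRel Rel u v) :
    SGRel Rel (P ++ u ++ Q) (P ++ v ++ Q) := by
  unfold SGRel at *
  rw [FreeMonoid.ofList_append, FreeMonoid.ofList_append,
    FreeMonoid.ofList_append, FreeMonoid.ofList_append]
  exact ConGen.Rel.mul (ConGen.Rel.mul (ConGen.Rel.refl _) h) (ConGen.Rel.refl _)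


theorem flatten_decomp' {X : Type*} (L : List (List X)) (j : ℕ) (h : j < L.length) :
    L.flatten = (L.take j).flatten ++ L.getD j [] ++ (L.drop (j + 1)).flatten := by
  conv_lhs => rw [← List.take_append_drop j L]
  rw [List.flatten_append, List.drop_eq_getElem_cons h, List.flatten_cons,
    List.getD_eq_getElem?_getD, List.getElem?_eq_getElem h]
  simp [List.append_assoc]

end Helpers

/-- If `B` is obtained from an admissible `A` by fixing `A` at location `i`, then
`|A| = |B|`, `π(A) = π(B)` in `S`, and `A` and `B` are `1`-fellow-travellers with
respect to the induced metric `d_Φ`. -/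
theorem fixing_preserves_element_and_fellow_travels {X : Type*}
    (Rel : Set (List X × List X)) (hK : K32 Rel) (hD : Dagger Rel)
    (A : List (List X)) (hA : IsPhiWord Rel A) (hAdm : Admissible Rel A)
    (i : ℕ) (hin : i < A.length)
    (p s q t C : List X)
    (hprev : prevBlock A i = q ++ p) (hnext : A.getD (i + 1) [] = s ++ t)
    (hdef : (p ++ A.getD i [] ++ s) ∈ defWords Rel)
    (hcomp : (p ++ A.getD i [] ++ s, C) ∈ Rel ∨ (C, p ++ A.getD i [] ++ s) ∈ Rel)
    (hlt : pieceLength (defWords Rel) C <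
      pieceLength (defWords Rel) (p ++ A.getD i [] ++ s))
    (B : List (List X)) (hB : B = ((A.set (i - 1) q).set i C).set (i + 1) t) :
    A.length = B.length ∧
    SGRel Rel A.flatten B.flatten ∧
    (∀ j : ℕ, dPhi Rel (toG Rel (A.take j).flatten) (toG Rel (B.take j).flatten) ≤ 1) := by
  subst hB
  set B := ((A.set (i - 1) q).set i C).set (i + 1) t with hB
  have hlen : A.length = B.length := by simp [hB]
  -- getD facts about B
  have hgd_hi : ∀ j, i + 1 < j → B.getD j [] = A.getD j [] := by
    intro j hj
    rw [hB, List.getD_eq_getElem?_getD, List.getElem?_set_ne (by omega : i + 1 ≠ j),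
      List.getElem?_set_ne (by omega : i ≠ j), List.getElem?_set_ne (by omega : i - 1 ≠ j),
      ← List.getD_eq_getElem?_getD]
  have hgC : B.getD i [] = C := by
    rw [hB, List.getD_eq_getElem?_getD, List.getElem?_set_ne (by omega : i + 1 ≠ i),
      List.getElem?_set_eq_of_lt C (by simpa using hin)]
    rfl
  have hgq : 0 < i → B.getD (i - 1) [] = q := by
    intro hi
    rw [hB, List.getD_eq_getElem?_getD, List.getElem?_set_ne (by omega : i + 1 ≠ i - 1),
      List.getElem?_set_ne (by omega : i ≠ i - 1),
      List.getElem?_set_eq_of_lt q (by omega)]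
    rfl
  have hgt : B.getD (i + 1) [] = t := by
    rcases Nat.lt_or_ge (i + 1) A.length with h | h
    · rw [hB, List.getD_eq_getElem?_getD, List.getElem?_set_eq_of_lt t (by simpa using h)]
      rfl
    · have hst : s ++ t = [] := by
        rw [← hnext, List.getD_eq_getElem?_getD, List.getElem?_eq_none h]
        rfl
      obtain ⟨hs0, ht0⟩ := List.append_eq_nil_iff.mp hst
      rw [ht0, hB, List.getD_eq_getElem?_getD, List.getElem?_eq_none (by simpa using h)]
      rfl
  have htake : ∀ j, j ≤ i - 1 → B.take j = A.take j := by
    intro j hj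
    rw [hB, List.take_set, List.take_set, List.take_set,
      List.set_eq_of_length_le, List.set_eq_of_length_le, List.set_eq_of_length_le] <;>
      · simp only [List.length_take, List.length_set]; omega
  have hF : ∀ (L : List (List X)) (j : ℕ),
      toG Rel (L.take (j + 1)).flatten
        = toG Rel (L.take j).flatten * toG Rel (L.getD j []) := by
    intro L j; rw [flatten_take_succ', toG_append']
  have hCW : toG Rel C = toG Rel p * toG Rel (A.getD i []) * toG Rel s := by
    have h1 : toG Rel C = toG Rel (p ++ A.getD i [] ++ s) := by
      rcases hcomp with h | h
      · exact (toG_rel' Rel h).symm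
      · exact toG_rel' Rel h
    rw [h1, toG_append', toG_append']
  -- membership of p and s in Bset (or empty)
  have hpB : p = [] ∨ p ∈ Bset Rel := by
    rcases Nat.eq_zero_or_pos i with hi | hi
    · left
      subst hi
      have h0 : q ++ p = [] := by simpa [prevBlock] using hprev.symm
      exact (List.append_eq_nil_iff.mp h0).2
    · by_cases hp0 : p = []
      · exact Or.inl hp0
      right
      have hq : A.getD (i - 1) [] = q ++ p := by
        rw [prevBlock, if_neg (by omega)] at hprev; exact hprev
      have hmem : A.getD (i - 1) [] ∈ A := by
        rw [List.getD_eq_getElem?_getD,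
          List.getElem?_eq_getElem (show i - 1 < A.length by omega)]
        exact List.getElem_mem _
      obtain ⟨-, D, hD, hinf⟩ := hA _ hmem
      exact ⟨hp0, D, hD, ((List.suffix_append q p).isInfix).trans (hq ▸ hinf)⟩
  have hsB : s = [] ∨ s ∈ Bset Rel := by
    rcases Nat.lt_or_ge (i + 1) A.length with h | h
    · by_cases hs0 : s = []
      · exact Or.inl hs0
      right
      have hmem : A.getD (i + 1) [] ∈ A := by
        rw [List.getD_eq_getElem?_getD, List.getElem?_eq_getElem h]
        exact List.getElem_mem _
      obtain ⟨-, D, hD, hinf⟩ := hA _ hmem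
      exact ⟨hs0, D, hD, ((List.prefix_append s t).isInfix).trans (hnext ▸ hinf)⟩
    · left
      have hst : s ++ t = [] := by
        rw [← hnext, List.getD_eq_getElem?_getD, List.getElem?_eq_none h]
        rfl
      exact (List.append_eq_nil_iff.mp hst).1
  -- the three key prefix identities
  have hE1 : toG Rel (A.take i).flatten = toG Rel (B.take i).flatten * toG Rel p := by
    rcases Nat.eq_zero_or_pos i with hi | hi
    · subst hi
      have h0 : q ++ p = [] := by simpa [prevBlock] using hprev.symm
      obtain ⟨-, hp0⟩ := List.append_eq_nil_iff.mp h0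
      simp [hp0, toG_nil']
    · obtain ⟨k, rfl⟩ : ∃ k, i = k + 1 := ⟨i - 1, by omega⟩
      have hq : A.getD k [] = q ++ p := by simpa [prevBlock] using hprev
      have hBq := hgq hi
      simp only [Nat.add_sub_cancel] at hBq
      rw [hF A k, hF B k, hq, hBq, htake k (by omega), toG_append']
      simp [mul_assoc]
  have hE2 : toG Rel (B.take (i + 1)).flatten
      = toG Rel (A.take (i + 1)).flatten * toG Rel s := by
    rw [hF B i, hF A i, hgC, hCW, hE1]
    simp [mul_assoc]
  have hE3 : ∀ j, i + 2 ≤ j →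
      toG Rel (B.take j).flatten = toG Rel (A.take j).flatten := by
    intro j hj
    induction j with
    | zero => omega
    | succ j ih =>
      rcases Nat.lt_or_ge j (i + 2) with h | h
      · have hj2 : j = i + 1 := by omega
        subst hj2
        rw [hF B (i + 1), hF A (i + 1), hgt, hE2, hnext, toG_append']
        simp [mul_assoc]
      · rw [hF B j, hF A j, ih h, hgd_hi j (by omega)]
  refine ⟨hlen, ?_, ?_⟩
  · -- SGRel part
    have hdropBA : B.drop (i + 1 + 1) = A.drop (i + 1 + 1) := by
      rw [hB, List.drop_set, if_pos (by omega), List.drop_set, if_pos (by omega),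
        List.drop_set, if_pos (by omega)]
    have htq : (A.take i).flatten = (A.take (i - 1)).flatten ++ (q ++ p) := by
      rcases Nat.eq_zero_or_pos i with hi | hi
      · subst hi
        have h0 : q ++ p = [] := by simpa [prevBlock] using hprev.symm
        simp [h0]
      · obtain ⟨k, rfl⟩ : ∃ k, i = k + 1 := ⟨i - 1, by omega⟩
        have hq : A.getD k [] = q ++ p := by simpa [prevBlock] using hprev
        rw [flatten_take_succ' A k, hq]
        simp
    have htqB : (B.take i).flatten = (A.take (i - 1)).flatten ++ q := by
      rcases Nat.eq_zero_or_pos i with hi | hi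
      · subst hi
        have h0 : q ++ p = [] := by simpa [prevBlock] using hprev.symm
        obtain ⟨hq0, -⟩ := List.append_eq_nil_iff.mp h0
        simp [hq0]
      · obtain ⟨k, rfl⟩ : ∃ k, i = k + 1 := ⟨i - 1, by omega⟩
        have hBq := hgq hi
        simp only [Nat.add_sub_cancel] at hBq ⊢
        rw [flatten_take_succ' B k, hBq, htake k (by omega)]
    have hdr : (A.drop (i + 1)).flatten = (s ++ t) ++ (A.drop (i + 1 + 1)).flatten := by
      rcases Nat.lt_or_ge (i + 1) A.length with h | h
      · have hAst : A[i + 1]'h = s ++ t := by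
          rw [← hnext, List.getD_eq_getElem?_getD, List.getElem?_eq_getElem h]
          rfl
        rw [List.drop_eq_getElem_cons h, List.flatten_cons, hAst]
      · have hst : s ++ t = [] := by
          rw [← hnext, List.getD_eq_getElem?_getD, List.getElem?_eq_none h]
          rfl
        rw [List.drop_eq_nil_of_le h, List.drop_eq_nil_of_le (by omega), hst]
        simp
    have hdrB : (B.drop (i + 1)).flatten = t ++ (A.drop (i + 1 + 1)).flatten := by
      rcases Nat.lt_or_ge (i + 1) A.length with h | h
      · have hBlt : i + 1 < B.length := by rw [← hlen]; exact h
        have hBt : B[i + 1]'hBlt = t := by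
          rw [← hgt, List.getD_eq_getElem?_getD, List.getElem?_eq_getElem hBlt]
          rfl
        rw [List.drop_eq_getElem_cons hBlt, List.flatten_cons, hBt, hdropBA]
      · have hst : s ++ t = [] := by
          rw [← hnext, List.getD_eq_getElem?_getD, List.getElem?_eq_none h]
          rfl
        obtain ⟨-, ht0⟩ := List.append_eq_nil_iff.mp hst
        rw [List.drop_eq_nil_of_le (show B.length ≤ i + 1 by omega),
          List.drop_eq_nil_of_le (by omega : A.length ≤ i + 1 + 1), ht0]
        simp
    have keyA : A.flatten = ((A.take (i - 1)).flatten ++ q) ++ (p ++ A.getD i [] ++ s)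
        ++ (t ++ (A.drop (i + 1 + 1)).flatten) := by
      rw [flatten_decomp' A i hin, htq, hdr]
      simp [List.append_assoc]
    have keyB : B.flatten = ((A.take (i - 1)).flatten ++ q) ++ C
        ++ (t ++ (A.drop (i + 1 + 1)).flatten) := by
      rw [flatten_decomp' B i (by omega : i < B.length), htqB, hgC, hdrB]
    rw [keyA, keyB]
    exact sgrel_infix' Rel _ _ _ _ (sgrel_base' Rel hcomp)
  · -- dPhi part
    intro j
    rcases Nat.lt_or_ge j i with hj | hj
    · rw [htake j (by omega)]
      exact dPhi_le_of_eq' Rel rfl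
    rcases Nat.lt_or_ge j (i + 1) with hj1 | hj1
    · have hji : j = i := by omega
      subst hji
      rw [hE1]
      rcases hpB with hp0 | hpB'
      · rw [hp0, toG_nil', mul_one]
        exact dPhi_le_of_eq' Rel rfl
      · exact dPhi_le_one_left' Rel _ hpB'
    rcases Nat.lt_or_ge j (i + 2) with hj2 | hj2
    · have hji : j = i + 1 := by omega
      subst hji
      rw [hE2]
      rcases hsB with hs0 | hsB'
      · rw [hs0, toG_nil', mul_one]
        exact dPhi_le_of_eq' Rel rfl
      · exact dPhi_le_one_right' Rel _ hsB'
    · rw [hE3 j hj2]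
      exact dPhi_le_of_eq' Rel rfl
end
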